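/- If (b₋₂,…,b₂) are i.i.d. standard Gaussian, then the random matrix Q with entries Q₁₁ = 2b₀/√3, Q₂₂ = −b₀/√3 + b₂, Q₃₃ = −b₀/√3 − b₂, Q₁₂ = Q₂₁ = b₁, Q₁₃ = Q₃₁ = b₋₁, Q₂₃ = Q₃₂ = b₋₂ (up to normalization) is symmetric and traceless, and its distribution is invariant under conjugation by any fixed rotation R ∈ SO(3). -/

import Mathlib

set_option maxRecDepth 8000

open MeasureTheory ProbabilityTheory Matrix Real

/-- The symmetric traceless matrix built from the quadrupole coefficients
`(b₋₂, b₋₁, b₀, b₁, b₂) = (v 0, v 1, v 2, v 3, v 4)`. -/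
noncomputable def quadMatrix (v : Fin 5 → ℝ) : Matrix (Fin 3) (Fin 3) ℝ :=
  !![2 * v 2 / Real.sqrt 3, v 3, v 1;
     v 3, -v 2 / Real.sqrt 3 + v 4, v 0;
     v 1, v 0, -v 2 / Real.sqrt 3 - v 4]

instance : MeasurableSpace (Matrix (Fin 3) (Fin 3) ℝ) :=
  (inferInstance : MeasurableSpace (Fin 3 → Fin 3 → ℝ))

/-! ### Linear algebra of the quadrupole parametrization -/

/-- Inverse of `quadMatrix` on symmetric traceless matrices. -/
noncomputable def invQuad (M : Matrix (Fin 3) (Fin 3) ℝ) : Fin 5 → ℝ :=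
  ![M 1 2, M 0 2, Real.sqrt 3 / 2 * M 0 0, M 0 1, (M 1 1 - M 2 2) / 2]

lemma quad_symm (v : Fin 5 → ℝ) : (quadMatrix v)ᵀ = quadMatrix v := by
  ext i j; fin_cases i <;> fin_cases j <;> simp [quadMatrix]

lemma quad_trace (v : Fin 5 → ℝ) : (quadMatrix v).trace = 0 := by
  simp [Matrix.trace, quadMatrix, Fin.sum_univ_three]
  ring

lemma quad_invQuad {M : Matrix (Fin 3) (Fin 3) ℝ} (hs : Mᵀ = M) (ht : M.trace = 0) :
    quadMatrix (invQuad M) = M := by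
  have h3 : Real.sqrt 3 ≠ 0 := by positivity
  have ht' : M 0 0 + M 1 1 + M 2 2 = 0 := by
    simpa [Matrix.trace, Fin.sum_univ_three] using ht
  have h10 : M 1 0 = M 0 1 := by simpa using (congrFun (congrFun hs 1) 0).symm
  have h20 : M 2 0 = M 0 2 := by simpa using (congrFun (congrFun hs 2) 0).symm
  have h21 : M 2 1 = M 1 2 := by simpa using (congrFun (congrFun hs 2) 1).symm
  ext i j
  fin_cases i <;> fin_cases j <;> simp [quadMatrix, invQuad, h10, h20, h21] <;> field_simp
  · linear_combination (-1) * ht'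
  · linear_combination (-1) * ht'

lemma trace_quad_sq (v : Fin 5 → ℝ) :
    ((quadMatrix v) * (quadMatrix v)).trace = 2 * ∑ i, v i ^ 2 := by
  have h3 : Real.sqrt 3 ^ 2 = 3 := Real.sq_sqrt (by norm_num)
  have h3' : Real.sqrt 3 ≠ 0 := by positivity
  simp [Matrix.trace, Matrix.mul_apply, quadMatrix, Fin.sum_univ_three, Fin.sum_univ_five]
  field_simp
  nlinarith [h3, sq_nonneg (v 2)]

lemma quadMatrix_add (v w : Fin 5 → ℝ) :
    quadMatrix (v + w) = quadMatrix v + quadMatrix w := by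
  ext i j; fin_cases i <;> fin_cases j <;> simp [quadMatrix] <;> ring

lemma quadMatrix_smul (c : ℝ) (v : Fin 5 → ℝ) :
    quadMatrix (c • v) = c • quadMatrix v := by
  ext i j; fin_cases i <;> fin_cases j <;> simp [quadMatrix] <;> ring

lemma invQuad_add (M N : Matrix (Fin 3) (Fin 3) ℝ) :
    invQuad (M + N) = invQuad M + invQuad N := by
  funext i; fin_cases i <;> simp [invQuad] <;> ring

lemma invQuad_smul (c : ℝ) (M : Matrix (Fin 3) (Fin 3) ℝ) :
    invQuad (c • M) = c • invQuad M := by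
  funext i; fin_cases i <;> simp [invQuad] <;> ring

/-- The linear action induced on the coefficient space by conjugating `quadMatrix` by `R`. -/
noncomputable def TR (R : Matrix (Fin 3) (Fin 3) ℝ) : (Fin 5 → ℝ) →ₗ[ℝ] (Fin 5 → ℝ) where
  toFun v := invQuad (R * quadMatrix v * Rᵀ)
  map_add' v w := by
    rw [quadMatrix_add, mul_add, add_mul, invQuad_add]
  map_smul' c v := by
    rw [quadMatrix_smul, Matrix.mul_smul, Matrix.smul_mul, invQuad_smul, RingHom.id_apply]

variable {R : Matrix (Fin 3) (Fin 3) ℝ} (hR1 : Rᵀ * R = 1)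

lemma conj_symm (v : Fin 5 → ℝ) : (R * quadMatrix v * Rᵀ)ᵀ = R * quadMatrix v * Rᵀ := by
  rw [Matrix.transpose_mul, Matrix.transpose_mul, Matrix.transpose_transpose, quad_symm,
    Matrix.mul_assoc]

include hR1 in
lemma conj_trace (v : Fin 5 → ℝ) : (R * quadMatrix v * Rᵀ).trace = 0 := by
  rw [Matrix.trace_mul_cycle, hR1, Matrix.one_mul, quad_trace]

include hR1 in
lemma quad_TR (v : Fin 5 → ℝ) : quadMatrix (TR R v) = R * quadMatrix v * Rᵀ :=
  quad_invQuad (conj_symm v) (conj_trace hR1 v)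

include hR1 in
lemma TR_norm (v : Fin 5 → ℝ) : ∑ i, TR R v i ^ 2 = ∑ i, v i ^ 2 := by
  have h1 := trace_quad_sq (TR R v)
  rw [quad_TR hR1 v] at h1
  have h2 : (R * quadMatrix v * Rᵀ * (R * quadMatrix v * Rᵀ)).trace
      = ((quadMatrix v) * (quadMatrix v)).trace := by
    have : R * quadMatrix v * Rᵀ * (R * quadMatrix v * Rᵀ)
        = R * (quadMatrix v * quadMatrix v) * Rᵀ := by
      calc R * quadMatrix v * Rᵀ * (R * quadMatrix v * Rᵀ)
          = R * quadMatrix v * (Rᵀ * R) * (quadMatrix v * Rᵀ) := by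
            simp only [Matrix.mul_assoc]
        _ = R * (quadMatrix v * quadMatrix v) * Rᵀ := by
            rw [hR1, Matrix.mul_one]; simp only [Matrix.mul_assoc]
    rw [this, Matrix.trace_mul_cycle, ← Matrix.mul_assoc, hR1, Matrix.one_mul]
  rw [h2, trace_quad_sq] at h1
  linarith

/-- A linear map of `ℝ⁵` preserving the sum of squares has an orthogonal matrix. -/
lemma orth_of_norm {T : (Fin 5 → ℝ) →ₗ[ℝ] (Fin 5 → ℝ)}
    (h : ∀ v, ∑ i, T v i ^ 2 = ∑ i, v i ^ 2) :
    (LinearMap.toMatrix' T)ᵀ * LinearMap.toMatrix' T = 1 := by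
  have expand : ∀ a b : Fin 5 → ℝ,
      ∑ k, (a k + b k) ^ 2 = (∑ k, a k ^ 2) + 2 * (∑ k, a k * b k) + ∑ k, b k ^ 2 := by
    intro a b
    rw [Finset.mul_sum, ← Finset.sum_add_distrib, ← Finset.sum_add_distrib]
    exact Finset.sum_congr rfl fun k _ => by ring
  have key : ∀ v w : Fin 5 → ℝ, ∑ k, T v k * T w k = ∑ k, v k * w k := by
    intro v w
    have h1 := h (v + w)
    simp only [map_add, Pi.add_apply] at h1
    rw [expand, expand, h v, h w] at h1
    linarith
  ext i j
  have := key (Pi.single i 1) (Pi.single j 1)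
  simp only [Matrix.mul_apply, Matrix.transpose_apply, LinearMap.toMatrix'_apply, Matrix.one_apply]
  have hM : ∀ (l : Fin 5) (k : Fin 5), (fun j' => if j' = l then (1:ℝ) else 0) = Pi.single l 1 := by
    intro l k; funext j'; simp [Pi.single_apply]
  rw [this]
  by_cases hij : i = j <;> simp [hij, Pi.single_apply, Finset.sum_ite_eq]
  exact fun hji => hij hji.symm

/-! ### The standard Gaussian measure on `ℝ⁵` and its rotation invariance -/

noncomputable def gpdf : (Fin 5 → ℝ) → ENNReal := fun x => ∏ i, gaussianPDF 0 1 (x i)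

lemma gpdf_eq (x : Fin 5 → ℝ) :
    gpdf x = ENNReal.ofReal ((Real.sqrt (2 * π))⁻¹ ^ 5 * Real.exp (-(∑ i, x i ^ 2) / 2)) := by
  unfold gpdf
  simp only [gaussianPDF]
  rw [← ENNReal.ofReal_prod_of_nonneg (fun i _ => gaussianPDFReal_nonneg 0 1 (x i))]
  congr 1
  simp only [gaussianPDFReal, NNReal.coe_one, mul_one, sub_zero]
  rw [Finset.prod_mul_distrib, Finset.prod_const, ← Real.exp_sum]
  congr 1
  rw [← Finset.sum_neg_distrib, Finset.sum_div]

lemma gpdf_measurable : Measurable gpdf := by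
  apply Finset.measurable_prod
  intro i _
  exact (measurable_gaussianPDF 0 1).comp (measurable_pi_apply i)

lemma gamma_eq :
    (Measure.pi fun _ : Fin 5 => gaussianReal 0 1) = volume.withDensity gpdf := by
  refine Measure.pi_eq fun s hs => ?_
  rw [withDensity_apply _ (MeasurableSet.univ_pi hs),
    ← lintegral_indicator (MeasurableSet.univ_pi hs)]
  have hind : (Set.pi Set.univ s).indicator gpdf
      = fun x => ∏ i, ENNReal.ofReal ((s i).indicator (gaussianPDFReal 0 1) (x i)) := by
    funext x
    by_cases hx : x ∈ Set.pi Set.univ s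
    · rw [Set.indicator_of_mem hx]
      unfold gpdf
      refine Finset.prod_congr rfl fun i _ => ?_
      rw [Set.indicator_of_mem (hx i (Set.mem_univ i))]
      rfl
    · rw [Set.indicator_of_notMem hx]
      obtain ⟨i, -, hi⟩ : ∃ i ∈ Set.univ, x i ∉ s i := by
        simpa [Set.mem_pi] using hx
      symm
      refine Finset.prod_eq_zero (Finset.mem_univ i) ?_
      rw [Set.indicator_of_notMem hi, ENNReal.ofReal_zero]
  rw [hind]
  have hint : Integrable (fun x : Fin 5 → ℝ => ∏ i, (s i).indicator (gaussianPDFReal 0 1) (x i)) :=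
    Integrable.fintype_prod fun i => (integrable_gaussianPDFReal 0 1).indicator (hs i)
  have hnn : 0 ≤ᵐ[volume] fun x : Fin 5 → ℝ => ∏ i, (s i).indicator (gaussianPDFReal 0 1) (x i) :=
    Filter.Eventually.of_forall fun x => Finset.prod_nonneg fun i _ =>
      Set.indicator_nonneg (fun y _ => gaussianPDFReal_nonneg 0 1 y) _
  have := ofReal_integral_eq_lintegral_ofReal hint hnn
  simp only [ENNReal.ofReal_prod_of_nonneg
    (fun i (_ : i ∈ Finset.univ) =>
      Set.indicator_nonneg (fun y _ => gaussianPDFReal_nonneg 0 1 y) _)] at this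
  rw [← this, MeasureTheory.integral_fintype_prod_volume_eq_prod,
    ENNReal.ofReal_prod_of_nonneg (fun i _ => integral_nonneg
      (Set.indicator_nonneg fun y _ => gaussianPDFReal_nonneg 0 1 y))]
  refine Finset.prod_congr rfl fun i _ => ?_
  rw [integral_indicator (hs i), ← gaussianReal_apply_eq_integral 0 one_ne_zero (s i)]

lemma map_T (T : (Fin 5 → ℝ) →ₗ[ℝ] (Fin 5 → ℝ)) (h : ∀ v, ∑ i, T v i ^ 2 = ∑ i, v i ^ 2) :
    (Measure.pi fun _ : Fin 5 => gaussianReal 0 1).map T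
      = Measure.pi fun _ : Fin 5 => gaussianReal 0 1 := by
  have hTm : Measurable T := T.continuous_of_finiteDimensional.measurable
  have horth := orth_of_norm h
  have hdet : LinearMap.det T * LinearMap.det T = 1 := by
    have := congrArg Matrix.det horth
    rwa [Matrix.det_mul, Matrix.det_transpose, Matrix.det_one, LinearMap.det_toMatrix'] at this
  have hdet1 : |(LinearMap.det T)⁻¹| = 1 := by
    rcases mul_self_eq_one_iff.mp hdet with h1 | h1 <;> rw [h1] <;> norm_num
  have hdet0 : LinearMap.det T ≠ 0 := by
    intro h0; rw [h0] at hdet; norm_num at hdet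
  have hvol : Measure.map T volume = volume := by
    rw [Real.map_linearMap_volume_pi_eq_smul_volume_pi hdet0, hdet1, ENNReal.ofReal_one, one_smul]
  have hg : ∀ x, gpdf (T x) = gpdf x := fun x => by rw [gpdf_eq, gpdf_eq, h x]
  ext A hA
  rw [Measure.map_apply hTm hA, gamma_eq, withDensity_apply _ (hTm hA), withDensity_apply _ hA,
    ← lintegral_indicator (hTm hA), ← lintegral_indicator hA]
  have hrw : (⇑T ⁻¹' A).indicator gpdf = fun x => A.indicator gpdf (T x) := by
    funext x
    by_cases hx : T x ∈ A
    · rw [Set.indicator_of_mem hx, Set.indicator_of_mem (by exact hx), hg]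
    · rw [Set.indicator_of_notMem hx, Set.indicator_of_notMem (by exact hx)]
  rw [hrw, ← lintegral_map (gpdf_measurable.indicator hA) hTm, hvol]

lemma joint {Ω : Type*} [MeasureSpace Ω] [IsProbabilityMeasure (ℙ : Measure Ω)]
    (b : Fin 5 → Ω → ℝ) (hmeas : ∀ i, Measurable (b i))
    (hindep : iIndepFun b ℙ)
    (hgauss : ∀ i, Measure.map (b i) ℙ = gaussianReal 0 1) :
    Measure.map (fun ω i => b i ω) ℙ = Measure.pi fun _ : Fin 5 => gaussianReal 0 1 := by
  refine (Measure.pi_eq fun s hs => ?_).symm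
  rw [Measure.map_apply (measurable_pi_lambda _ hmeas) (MeasurableSet.univ_pi hs)]
  have hpre : (fun ω i => b i ω) ⁻¹' Set.pi Set.univ s
      = ⋂ i ∈ (Finset.univ : Finset (Fin 5)), b i ⁻¹' s i := by
    ext ω; simp [Set.mem_pi]
  rw [hpre, hindep.measure_inter_preimage_eq_mul Finset.univ (fun i _ => hs i)]
  exact Finset.prod_congr rfl fun i _ => by rw [← Measure.map_apply (hmeas i) (hs i), hgauss i]

lemma quadMatrix_measurable : Measurable quadMatrix := by
  have : Measurable (fun v : Fin 5 → ℝ => (fun i j => quadMatrix v i j : Fin 3 → Fin 3 → ℝ)) := by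
    apply measurable_pi_lambda
    intro i
    apply measurable_pi_lambda
    intro j
    fin_cases i <;> fin_cases j <;> simp [quadMatrix] <;> fun_prop
  exact this

/-- If `(b₋₂,…,b₂)` are i.i.d. standard Gaussians, the random quadrupole matrix `Q` with
`Q₁₁ = 2b₀/√3`, `Q₂₂ = −b₀/√3 + b₂`, `Q₃₃ = −b₀/√3 − b₂`, `Q₁₂ = b₁`, `Q₁₃ = b₋₁`,
`Q₂₃ = b₋₂` is symmetric and traceless, and its law is invariant under conjugation by any
fixed `R ∈ SO(3)`. -/
theorem stmt_19 {Ω : Type*} [MeasureSpace Ω] [IsProbabilityMeasure (ℙ : Measure Ω)]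
    (b : Fin 5 → Ω → ℝ) (hmeas : ∀ i, Measurable (b i))
    (hindep : iIndepFun b ℙ)
    (hgauss : ∀ i, Measure.map (b i) ℙ = gaussianReal 0 1) :
    (∀ v : Fin 5 → ℝ, (quadMatrix v)ᵀ = quadMatrix v ∧ (quadMatrix v).trace = 0) ∧
    ∀ R : Matrix (Fin 3) (Fin 3) ℝ, R ∈ Matrix.specialOrthogonalGroup (Fin 3) ℝ →
      Measure.map (fun ω => R * quadMatrix (fun i => b i ω) * Rᵀ) ℙ =
        Measure.map (fun ω => quadMatrix (fun i => b i ω)) ℙ := by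
  refine ⟨fun v => ⟨quad_symm v, quad_trace v⟩, fun R hmem => ?_⟩
  have hstar : star R = Rᵀ := by ext i j; simp [Matrix.star_apply]
  have hR1 : Rᵀ * R = 1 := by
    have := (Matrix.mem_orthogonalGroup_iff' (Fin 3) ℝ).mp
      ((Matrix.mem_specialOrthogonalGroup_iff).mp hmem).1
    exact this
  have hXm : Measurable (fun ω i => b i ω) := measurable_pi_lambda _ hmeas
  have hTm : Measurable (TR R) := (TR R).continuous_of_finiteDimensional.measurable
  have hmapX := joint b hmeas hindep hgauss
  have hcomp : (fun ω => R * quadMatrix (fun i => b i ω) * Rᵀ)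
      = (quadMatrix ∘ ⇑(TR R)) ∘ (fun ω i => b i ω) := by
    funext ω
    simp only [Function.comp_apply]
    rw [quad_TR hR1]
  rw [hcomp, ← Measure.map_map (quadMatrix_measurable.comp hTm) hXm, hmapX,
    ← Measure.map_map quadMatrix_measurable hTm, map_T (TR R) (TR_norm hR1), ← hmapX,
    Measure.map_map quadMatrix_measurable hXm]
  rfl
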